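/- For every integer n ≥ 1, setting t = ⌊n/2⌋, it holds that 2 − 2t/n + H_t − H_n ≥ 1 − ln 2, where H_k = Σ_{i=1}^k 1/i denotes the k-th harmonic number (H_0 = 0). -/

import Mathlib

lemma inv_le_log_succ (a : ℝ) (ha : 0 < a) :
    1 / (a + 1) ≤ Real.log (a + 1) - Real.log a := by
  have h1 : (0:ℝ) < a + 1 := by linarith
  have h := Real.log_le_sub_one_of_pos (show 0 < a / (a + 1) by positivity)
  rw [Real.log_div (ne_of_gt ha) (ne_of_gt h1)] at h
  have h2 : a / (a + 1) - 1 = -(1 / (a + 1)) := by field_simp; ring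
  linarith

lemma sum_inv_Ioc_le_log_two (t : ℕ) :
    ∑ i ∈ Finset.Ioc t (2 * t), (1 : ℝ) / (i : ℝ) ≤ Real.log 2 := by
  rcases Nat.eq_zero_or_pos t with rfl | ht
  · simp [Real.log_nonneg one_le_two]
  · have htR : (0:ℝ) < (t:ℝ) := by exact_mod_cast ht
    have hIoc : Finset.Ioc t (2 * t) = Finset.Ico (t + 1) (2 * t + 1) := by
      ext x; simp [Nat.lt_succ_iff]
    rw [hIoc, Finset.sum_Ico_eq_sum_range]
    have hsub : 2 * t + 1 - (t + 1) = t := by omega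
    rw [hsub]
    have hb : ∀ i ∈ Finset.range t,
        (1 : ℝ) / ((t + 1 + i : ℕ) : ℝ) ≤
          Real.log ((t : ℝ) + (i + 1)) - Real.log ((t : ℝ) + i) := by
      intro i _
      have ha : (0:ℝ) < (t:ℝ) + i := by positivity
      have := inv_le_log_succ ((t:ℝ) + i) ha
      have hcast : ((t + 1 + i : ℕ) : ℝ) = (t:ℝ) + i + 1 := by push_cast; ring
      rw [hcast]
      have : Real.log ((t:ℝ) + i + 1) = Real.log ((t:ℝ) + (i + 1)) := by ring_nf
      linarith [inv_le_log_succ ((t:ℝ) + i) ha, this ▸ inv_le_log_succ ((t:ℝ) + i) ha]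
    calc ∑ i ∈ Finset.range t, (1 : ℝ) / ((t + 1 + i : ℕ) : ℝ)
        ≤ ∑ i ∈ Finset.range t,
            (Real.log ((t : ℝ) + (i + 1)) - Real.log ((t : ℝ) + i)) :=
          Finset.sum_le_sum hb
      _ = Real.log ((t : ℝ) + t) - Real.log ((t : ℝ) + 0) := by
          have := Finset.sum_range_sub (fun i : ℕ => Real.log ((t : ℝ) + i)) t
          simpa using this
      _ = Real.log 2 := by
          have : (t : ℝ) + t = 2 * t := by ring
          rw [this, Real.log_mul (by norm_num) (ne_of_gt htR)]
          simp

theorem harmonic_half_bound (n : ℕ) (hn : 1 ≤ n)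
    (H : ℕ → ℝ) (hH : ∀ k, H k = ∑ i ∈ Finset.Icc 1 k, (1 : ℝ) / (i : ℝ)) :
    2 - 2 * ((n / 2 : ℕ) : ℝ) / (n : ℝ) + H (n / 2) - H n ≥ 1 - Real.log 2 := by
  rw [hH, hH]
  have hle : n / 2 ≤ n := Nat.div_le_self n 2
  have hsplit : ∑ i ∈ Finset.Icc 1 n, (1 : ℝ) / (i : ℝ)
      = ∑ i ∈ Finset.Icc 1 (n / 2), (1 : ℝ) / (i : ℝ)
        + ∑ i ∈ Finset.Ioc (n / 2) n, (1 : ℝ) / (i : ℝ) := by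
    rw [show Finset.Icc 1 n = Finset.Ioc 0 n from by ext x; simp [Nat.lt_iff_add_one_le],
        show Finset.Icc 1 (n/2) = Finset.Ioc 0 (n/2) from by
          ext x; simp [Nat.lt_iff_add_one_le]]
    exact (Finset.sum_Ioc_consecutive _ (Nat.zero_le _) hle).symm
  rw [hsplit]
  rcases Nat.even_or_odd n with ⟨t, hnt⟩ | ⟨t, hnt⟩
  · -- n = 2t
    have ht : 1 ≤ t := by omega
    have hdiv : n / 2 = t := by omega
    have hkey := sum_inv_Ioc_le_log_two t
    have hnR : (0:ℝ) < (n:ℝ) := by exact_mod_cast hn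
    have hfrac : 2 * ((t : ℕ) : ℝ) / (n : ℝ) = 1 := by
      have : (n:ℝ) = 2 * t := by exact_mod_cast (by omega : n = 2 * t)
      rw [this]; field_simp
    rw [hdiv]
    have h2t : Finset.Ioc t n = Finset.Ioc t (2 * t) := by rw [show n = 2*t from by omega]
    rw [h2t]
    linarith
  · -- n = 2t + 1
    have hdiv : n / 2 = t := by omega
    have hkey := sum_inv_Ioc_le_log_two t
    rw [hdiv]
    have hIoc : Finset.Ioc t n = Finset.Ioc t (2 * t + 1) := by
      rw [show n = 2*t+1 from by omega]
    have hstep : ∑ i ∈ Finset.Ioc t (2 * t + 1), (1 : ℝ) / (i : ℝ)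
        = ∑ i ∈ Finset.Ioc t (2 * t), (1 : ℝ) / (i : ℝ) + 1 / ((2 * t + 1 : ℕ) : ℝ) := by
      exact Finset.sum_Ioc_succ_top (by omega) _
    have hnR : (0:ℝ) < (n:ℝ) := by exact_mod_cast hn
    have hneq : (n:ℝ) = 2 * (t:ℝ) + 1 := by exact_mod_cast (by omega : n = 2 * t + 1)
    have hcast : ((2 * t + 1 : ℕ) : ℝ) = (n:ℝ) := by rw [hneq]; push_cast; ring
    have harith : 2 - 2 * ((t : ℕ) : ℝ) / (n : ℝ) - 1 / (n : ℝ) = 1 := by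
      rw [hneq]; field_simp; ring
    rw [hIoc, hstep, hcast]
    linarith
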